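/- arXiv:2106.04105 — 2 statements merged into one kernel-verified Lean document; each statement's English description precedes it below -/
import Mathlib

section
/- Let α ∈ (0,1], let μ be a probability distribution on the k-element subsets of [n] with single-element marginals p_i = (1/k)·∑_{S ∋ i} μ(S). Suppose μ is (1/α)-entropically independent, i.e., for every probability distribution ν on the k-element subsets of [n] with supp(ν) ⊆ supp(μ), D(ν D_{k→1} ‖ μ D_{k→1}) ≤ (1/(αk))·D(ν ‖ μ). Then for all (z₁,…,zₙ) ∈ ℝ^n_{≥0}, g_μ(z₁,…,zₙ) ≤ (∑_{i=1}^n p_i z_i^{1/α})^{αk}. -/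
open Finset

/-- The generating polynomial `g_μ(z) = ∑_S μ(S) ∏_{i∈S} z_i`. -/
noncomputable def genPoly {n : ℕ} (μ : Finset (Fin n) → ℝ) (z : Fin n → ℝ) : ℝ :=
  ∑ S : Finset (Fin n), μ S * ∏ i ∈ S, z i

/-- The `k → 1` down operator: `(ν D_{k→1})(i) = (1/k) ∑_{S ∋ i} ν(S)`. -/
noncomputable def down1 {n : ℕ} (k : ℕ) (ν : Finset (Fin n) → ℝ) (i : Fin n) : ℝ :=
  (1 / (k : ℝ)) * ∑ S ∈ Finset.univ.filter (fun S => i ∈ S), ν S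

/-- KL divergence `D(ν ‖ μ) = ∑_x ν(x) log (ν(x)/μ(x))` on a finite type. -/
noncomputable def KLdiv {X : Type*} [Fintype X] (ν μ : X → ℝ) : ℝ :=
  ∑ x : X, ν x * Real.log (ν x / μ x)

/-- Exchange of summation: weighted double counting. -/
lemma swap_sum {n : ℕ} (f : Finset (Fin n) → ℝ) (w : Fin n → ℝ) :
    ∑ S : Finset (Fin n), f S * ∑ i ∈ S, w i
      = ∑ i : Fin n, w i * ∑ S ∈ Finset.univ.filter (fun S => i ∈ S), f S := by
  calc ∑ S : Finset (Fin n), f S * ∑ i ∈ S, w i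
      = ∑ S : Finset (Fin n), ∑ i : Fin n, (if i ∈ S then f S * w i else 0) := by
        refine Finset.sum_congr rfl fun S _ => ?_
        rw [Finset.mul_sum, Finset.sum_ite_mem, Finset.univ_inter]
    _ = ∑ i : Fin n, ∑ S : Finset (Fin n), (if i ∈ S then f S * w i else 0) :=
        Finset.sum_comm
    _ = ∑ i : Fin n, w i * ∑ S ∈ Finset.univ.filter (fun S => i ∈ S), f S := by
        refine Finset.sum_congr rfl fun i _ => ?_
        rw [Finset.mul_sum, Finset.sum_filter]
        exact Finset.sum_congr rfl fun S _ => by split <;> ring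

/-- Gibbs' inequality / Jensen for log. -/
lemma gibbs {ι : Type*} [Fintype ι] (q a : ι → ℝ) (hq0 : ∀ i, 0 ≤ q i)
    (hq1 : ∑ i, q i = 1) (ha0 : ∀ i, 0 ≤ a i) (ha : ∀ i, q i ≠ 0 → 0 < a i)
    (hT : 0 < ∑ i, a i) :
    ∑ i, q i * Real.log (a i / q i) ≤ Real.log (∑ i, a i) := by
  set T := ∑ i, a i with hTdef
  have key : ∀ i, q i * Real.log (a i / q i) ≤ a i / T - q i + q i * Real.log T := by
    intro i
    rcases eq_or_ne (q i) 0 with h | h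
    · rw [h]
      have : 0 ≤ a i / T := div_nonneg (ha0 i) hT.le
      simpa using this
    · have hqi : 0 < q i := (hq0 i).lt_of_ne (Ne.symm h)
      have hai := ha i h
      have hlog : Real.log (a i / (q i * T)) ≤ a i / (q i * T) - 1 :=
        Real.log_le_sub_one_of_pos (by positivity)
      have hsplit : Real.log (a i / q i) = Real.log (a i / (q i * T)) + Real.log T := by
        rw [← Real.log_mul (by positivity) hT.ne']
        congr 1
        field_simp
      rw [hsplit]
      have h2 := mul_le_mul_of_nonneg_left hlog hqi.le
      have h3 : q i * (a i / (q i * T) - 1) = a i / T - q i := by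
        field_simp
      nlinarith [h2, h3]
  calc ∑ i, q i * Real.log (a i / q i)
      ≤ ∑ i, (a i / T - q i + q i * Real.log T) :=
        Finset.sum_le_sum fun i _ => key i
    _ = (∑ i, a i) / T - (∑ i, q i) + (∑ i, q i) * Real.log T := by
        rw [Finset.sum_add_distrib, Finset.sum_sub_distrib, Finset.sum_div,
          ← Finset.sum_mul]
    _ = Real.log T := by
        rw [hq1, ← hTdef, div_self hT.ne']
        ring

theorem stmt_2 (n k : ℕ) (α : ℝ) (hα0 : 0 < α) (hα1 : α ≤ 1)
    (μ : Finset (Fin n) → ℝ)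
    (hμ0 : ∀ S, 0 ≤ μ S)
    (hμk : ∀ S, μ S ≠ 0 → S.card = k)
    (hμ1 : ∑ S : Finset (Fin n), μ S = 1)
    (hEI : ∀ ν : Finset (Fin n) → ℝ,
      (∀ S, 0 ≤ ν S) → (∀ S, ν S ≠ 0 → S.card = k) →
      (∑ S : Finset (Fin n), ν S = 1) → (∀ S, μ S = 0 → ν S = 0) →
      KLdiv (down1 k ν) (down1 k μ) ≤ (1 / (α * (k : ℝ))) * KLdiv ν μ) :
    ∀ z : Fin n → ℝ, (∀ i, 0 ≤ z i) →
      genPoly μ z ≤ (∑ i : Fin n, down1 k μ i * z i ^ (1 / α)) ^ (α * (k : ℝ)) := by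
  intro z hz
  -- Case k = 0
  rcases Nat.eq_zero_or_pos k with hk0 | hkpos
  · subst hk0
    have hsupp : ∀ S : Finset (Fin n), S ≠ ∅ → μ S = 0 := by
      intro S hS
      by_contra h
      exact hS (Finset.card_eq_zero.mp (hμk S h))
    have hμe : μ ∅ = 1 := by
      rw [← hμ1, Finset.sum_eq_single (∅ : Finset (Fin n))]
      · intro S _ hS; exact hsupp S hS
      · intro h; exact absurd (Finset.mem_univ _) h
    have hg : genPoly μ z = 1 := by
      unfold genPoly
      rw [Finset.sum_eq_single (∅ : Finset (Fin n))]
      · simpa using hμe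
      · intro S _ hS; rw [hsupp S hS]; ring
      · intro h; exact absurd (Finset.mem_univ _) h
    have hdown : ∀ i, down1 0 μ i = 0 := by intro i; simp [down1]
    simp [hg, hdown]
  have hk : (0 : ℝ) < k := by exact_mod_cast hkpos
  have hαk : 0 < α * (k : ℝ) := mul_pos hα0 hk
  set g := genPoly μ z with hgdef
  have hg0 : 0 ≤ g := by
    rw [hgdef]; unfold genPoly
    exact Finset.sum_nonneg fun S _ =>
      mul_nonneg (hμ0 S) (Finset.prod_nonneg fun i _ => hz i)
  have hp0 : ∀ i, 0 ≤ down1 k μ i := fun i =>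
    mul_nonneg (by positivity) (Finset.sum_nonneg fun S _ => hμ0 S)
  have ha0 : ∀ i, 0 ≤ down1 k μ i * z i ^ (1 / α) := fun i =>
    mul_nonneg (hp0 i) (Real.rpow_nonneg (hz i) _)
  rcases hg0.eq_or_lt with hg | hg
  · rw [← hg]
    exact Real.rpow_nonneg (Finset.sum_nonneg fun i _ => ha0 i) _
  -- Tilted distribution
  set ν : Finset (Fin n) → ℝ := fun S => μ S * (∏ i ∈ S, z i) / g with hνdef
  have hν0 : ∀ S, 0 ≤ ν S := fun S =>
    div_nonneg (mul_nonneg (hμ0 S) (Finset.prod_nonneg fun i _ => hz i)) hg.le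
  have hνsupp : ∀ S, μ S = 0 → ν S = 0 := by
    intro S h
    show μ S * (∏ i ∈ S, z i) / g = 0
    rw [h]; ring
  have hνμ : ∀ S, ν S ≠ 0 → μ S ≠ 0 := fun S h h0 => h (hνsupp S h0)
  have hνk : ∀ S, ν S ≠ 0 → S.card = k := fun S h => hμk S (hνμ S h)
  have hνprod : ∀ S, ν S ≠ 0 → (∏ i ∈ S, z i) ≠ 0 := by
    intro S h h0
    apply h
    show μ S * (∏ i ∈ S, z i) / g = 0
    rw [h0]; ring
  have hν1 : ∑ S : Finset (Fin n), ν S = 1 := by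
    have h1 : ∑ S : Finset (Fin n), ν S
        = (∑ S : Finset (Fin n), μ S * ∏ i ∈ S, z i) / g := by
      rw [Finset.sum_div]
    rw [h1]
    exact div_self hg.ne'
  -- marginal facts
  have hsumfν : ∀ i : Fin n,
      ∑ S ∈ Finset.univ.filter (fun S => i ∈ S), ν S = (k : ℝ) * down1 k ν i := by
    intro i; unfold down1; field_simp
  have hq0 : ∀ i, 0 ≤ down1 k ν i := fun i =>
    mul_nonneg (by positivity) (Finset.sum_nonneg fun S _ => hν0 S)
  have hq1 : ∑ i : Fin n, down1 k ν i = 1 := by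
    have h1 : ∑ S : Finset (Fin n), ν S * ∑ i ∈ S, (1 : ℝ)
        = ∑ i : Fin n, (1 : ℝ) * ∑ S ∈ Finset.univ.filter (fun S => i ∈ S), ν S :=
      swap_sum ν (fun _ => (1 : ℝ))
    have h2 : ∀ S : Finset (Fin n), ν S * ∑ i ∈ S, (1 : ℝ) = ν S * (k : ℝ) := by
      intro S
      rcases eq_or_ne (ν S) 0 with h | h
      · rw [h]; ring
      · rw [Finset.sum_const, nsmul_eq_mul, mul_one, hνk S h]
    rw [Finset.sum_congr rfl (fun S _ => h2 S)] at h1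
    rw [← Finset.sum_mul, hν1, one_mul] at h1
    have h3 : ∀ i : Fin n, (1 : ℝ) * ∑ S ∈ Finset.univ.filter (fun S => i ∈ S), ν S
        = (k : ℝ) * down1 k ν i := by
      intro i; rw [one_mul, hsumfν i]
    rw [Finset.sum_congr rfl (fun i _ => h3 i), ← Finset.mul_sum] at h1
    have := h1.symm
    field_simp at this
    linarith [this]
  have hqz : ∀ i, down1 k ν i ≠ 0 → 0 < down1 k μ i ∧ 0 < z i := by
    intro i hqi
    have hsum : ∑ S ∈ Finset.univ.filter (fun S => i ∈ S), ν S ≠ 0 := by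
      intro h0
      apply hqi
      unfold down1; rw [h0]; ring
    obtain ⟨S, hSmem, hSne⟩ := Finset.exists_ne_zero_of_sum_ne_zero hsum
    have hiS : i ∈ S := (Finset.mem_filter.mp hSmem).2
    have hzi : 0 < z i := by
      rcases (hz i).eq_or_lt with h | h
      · exact absurd (Finset.prod_eq_zero hiS h.symm) (hνprod S hSne)
      · exact h
    have hpi : 0 < down1 k μ i := by
      unfold down1
      refine mul_pos (by positivity) ?_
      exact Finset.sum_pos' (fun T _ => hμ0 T)
        ⟨S, hSmem, (hμ0 S).lt_of_ne (Ne.symm (hνμ S hSne))⟩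
    exact ⟨hpi, hzi⟩
  -- KL divergence of ν from μ
  have hKL : KLdiv ν μ
      = (∑ S : Finset (Fin n), ν S * ∑ i ∈ S, Real.log (z i)) - Real.log g := by
    unfold KLdiv
    have hterm : ∀ S : Finset (Fin n), ν S * Real.log (ν S / μ S)
        = ν S * (∑ i ∈ S, Real.log (z i)) - ν S * Real.log g := by
      intro S
      rcases eq_or_ne (ν S) 0 with h | h
      · rw [h]; ring
      · have hμS : μ S ≠ 0 := hνμ S h
        have hprod : (∏ j ∈ S, z j) ≠ 0 := hνprod S h
        have hratio : ν S / μ S = (∏ j ∈ S, z j) / g := by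
          show (μ S * (∏ j ∈ S, z j) / g) / μ S = _
          field_simp
        rw [hratio, Real.log_div hprod hg.ne',
          Real.log_prod (s := S) (f := z) (fun j hj => Finset.prod_ne_zero_iff.mp hprod j hj)]
        ring
    rw [Finset.sum_congr rfl (fun S _ => hterm S), Finset.sum_sub_distrib,
      ← Finset.sum_mul, hν1, one_mul]
  have hswap : ∑ S : Finset (Fin n), ν S * ∑ i ∈ S, Real.log (z i)
      = ∑ i : Fin n, Real.log (z i) * ((k : ℝ) * down1 k ν i) := by
    rw [swap_sum ν (fun i => Real.log (z i))]
    exact Finset.sum_congr rfl fun i _ => by rw [hsumfν i]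
  -- apply entropic independence
  have hmain := hEI ν hν0 hνk hν1 hνsupp
  have hmain2 : (α * (k : ℝ)) * KLdiv (down1 k ν) (down1 k μ) ≤ KLdiv ν μ := by
    have h := mul_le_mul_of_nonneg_left hmain hαk.le
    have h2 : (α * (k : ℝ)) * ((1 / (α * (k : ℝ))) * KLdiv ν μ) = KLdiv ν μ := by
      field_simp
    linarith [h, h2.le, h2.ge]
  -- the key bound: log g ≤ αk · ∑ q i log (a i / q i)
  have hterm2 : ∀ i : Fin n,
      (k : ℝ) * (Real.log (z i) * down1 k ν i)
        - (α * (k : ℝ)) * (down1 k ν i * Real.log (down1 k ν i / down1 k μ i))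
      = (α * (k : ℝ)) * (down1 k ν i
          * Real.log ((down1 k μ i * z i ^ (1 / α)) / down1 k ν i)) := by
    intro i
    rcases eq_or_ne (down1 k ν i) 0 with h | h
    · rw [h]; ring
    · obtain ⟨hpi, hzi⟩ := hqz i h
      have hqi : 0 < down1 k ν i := (hq0 i).lt_of_ne (Ne.symm h)
      have hai : 0 < z i ^ (1 / α) := Real.rpow_pos_of_pos hzi _
      rw [Real.log_div h hpi.ne', Real.log_div (by positivity) h,
        Real.log_mul hpi.ne' hai.ne', Real.log_rpow hzi]
      field_simp
      ring
  have hlogg : Real.log g ≤ (α * (k : ℝ))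
      * ∑ i : Fin n, down1 k ν i
          * Real.log ((down1 k μ i * z i ^ (1 / α)) / down1 k ν i) := by
    have hK : KLdiv ν μ
        = ∑ i : Fin n, (k : ℝ) * (Real.log (z i) * down1 k ν i) - Real.log g := by
      rw [hKL, hswap]
      congr 1
      exact Finset.sum_congr rfl fun i _ => by ring
    have hD : KLdiv (down1 k ν) (down1 k μ)
        = ∑ i : Fin n, down1 k ν i * Real.log (down1 k ν i / down1 k μ i) := rfl
    rw [hK, hD] at hmain2
    have hsum : ∑ i : Fin n, ((k : ℝ) * (Real.log (z i) * down1 k ν i)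
          - (α * (k : ℝ)) * (down1 k ν i * Real.log (down1 k ν i / down1 k μ i)))
        = (α * (k : ℝ)) * ∑ i : Fin n, down1 k ν i
            * Real.log ((down1 k μ i * z i ^ (1 / α)) / down1 k ν i) := by
      rw [Finset.sum_congr rfl (fun i _ => hterm2 i), ← Finset.mul_sum]
    rw [Finset.sum_sub_distrib, ← Finset.mul_sum] at hsum
    rw [Finset.mul_sum] at hmain2
    have hbr : ∑ i : Fin n, (k : ℝ) * (Real.log (z i) * down1 k ν i)
        = (k : ℝ) * ∑ i : Fin n, Real.log (z i) * down1 k ν i :=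
      (Finset.mul_sum _ _ _).symm
    linarith [hsum, hmain2, hbr]
  -- positivity of the sum T
  have hT : 0 < ∑ i : Fin n, down1 k μ i * z i ^ (1 / α) := by
    have hgne : (∑ S : Finset (Fin n), μ S * ∏ i ∈ S, z i) ≠ 0 := by
      intro h0
      rw [hgdef] at hg
      unfold genPoly at hg
      rw [h0] at hg
      exact lt_irrefl _ hg
    obtain ⟨S, _, hSne⟩ := Finset.exists_ne_zero_of_sum_ne_zero hgne
    have hμS : μ S ≠ 0 := fun h0 => hSne (by rw [h0]; ring)
    have hprod : (∏ i ∈ S, z i) ≠ 0 := fun h0 => hSne (by rw [h0]; ring)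
    have hScard : S.card = k := hμk S hμS
    have hSne' : S.Nonempty := Finset.card_pos.mp (hScard ▸ hkpos)
    obtain ⟨i, hiS⟩ := hSne'
    have hzi : 0 < z i := by
      rcases (hz i).eq_or_lt with h | h
      · exact absurd (Finset.prod_eq_zero hiS h.symm) hprod
      · exact h
    have hpi : 0 < down1 k μ i := by
      unfold down1
      refine mul_pos (by positivity) ?_
      exact Finset.sum_pos' (fun T _ => hμ0 T)
        ⟨S, Finset.mem_filter.mpr ⟨Finset.mem_univ _, hiS⟩,
          (hμ0 S).lt_of_ne (Ne.symm hμS)⟩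
    exact Finset.sum_pos' (fun j _ => ha0 j)
      ⟨i, Finset.mem_univ _, mul_pos hpi (Real.rpow_pos_of_pos hzi _)⟩
  -- Gibbs' inequality
  have hgibbs := gibbs (down1 k ν) (fun i => down1 k μ i * z i ^ (1 / α))
    hq0 hq1 ha0 (fun i h => mul_pos ((hqz i h).1) (Real.rpow_pos_of_pos (hqz i h).2 _)) hT
  have hfinal : Real.log g
      ≤ (α * (k : ℝ)) * Real.log (∑ i : Fin n, down1 k μ i * z i ^ (1 / α)) := by
    calc Real.log g ≤ _ := hlogg
      _ ≤ (α * (k : ℝ)) * Real.log (∑ i : Fin n, down1 k μ i * z i ^ (1 / α)) :=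
        mul_le_mul_of_nonneg_left hgibbs hαk.le
  calc g = Real.exp (Real.log g) := (Real.exp_log hg).symm
    _ ≤ Real.exp ((α * (k : ℝ))
        * Real.log (∑ i : Fin n, down1 k μ i * z i ^ (1 / α))) :=
      Real.exp_le_exp.mpr hfinal
    _ = (∑ i : Fin n, down1 k μ i * z i ^ (1 / α)) ^ (α * (k : ℝ)) := by
      rw [Real.rpow_def_of_pos hT, mul_comm]
end

section
/- Let α ∈ (0,1] and let μ be a probability distribution on the k-element subsets of [n] that is α-fractionally log-concave. Then for every external field λ = (λ₁,…,λₙ) ∈ ℝ^n_{>0}, the distribution λ ∗ μ is (1/α)-entropically independent: for every probability distribution ν on the k-element subsets of [n] with supp(ν) ⊆ supp(λ ∗ μ), D(ν D_{k→1} ‖ (λ ∗ μ) D_{k→1}) ≤ (1/(αk))·D(ν ‖ λ ∗ μ). -/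
open Finset

/-- The external field `λ ∗ μ`, with `(λ ∗ μ)(S) ∝ μ(S) ∏_{i∈S} λ_i`. -/
noncomputable def extField {n : ℕ} (μ : Finset (Fin n) → ℝ) (lam : Fin n → ℝ)
    (S : Finset (Fin n)) : ℝ :=
  μ S * (∏ i ∈ S, lam i) / (∑ T : Finset (Fin n), μ T * ∏ i ∈ T, lam i)

lemma gibbs_s5 {X : Type*} [Fintype X] (p q : X → ℝ) (hp0 : ∀ x, 0 ≤ p x)
    (hq0 : ∀ x, 0 ≤ q x) (hp1 : ∑ x : X, p x = 1) (hq1 : ∑ x : X, q x ≤ 1)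
    (habs : ∀ x, q x = 0 → p x = 0) : 0 ≤ KLdiv p q := by
  have key : ∀ x, p x - q x ≤ p x * Real.log (p x / q x) := by
    intro x
    rcases eq_or_lt_of_le (hp0 x) with h | h
    · rw [← h]; simpa using hq0 x
    · have hq : 0 < q x := by
        rcases eq_or_lt_of_le (hq0 x) with h2 | h2
        · exact absurd (habs x h2.symm) (ne_of_gt h)
        · exact h2
      have h1 : Real.log (q x / p x) ≤ q x / p x - 1 :=
        Real.log_le_sub_one_of_pos (div_pos hq h)
      have h2 : 1 - q x / p x ≤ Real.log (p x / q x) := by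
        rw [Real.log_div (ne_of_gt h) (ne_of_gt hq)]
        rw [Real.log_div (ne_of_gt hq) (ne_of_gt h)] at h1
        linarith
      have := mul_le_mul_of_nonneg_left h2 (le_of_lt h)
      calc p x - q x = p x * (1 - q x / p x) := by field_simp
        _ ≤ p x * Real.log (p x / q x) := this
  calc (0:ℝ) = 1 - 1 := by ring
    _ ≤ ∑ x : X, p x - ∑ x : X, q x := by
        rw [hp1]; linarith
    _ = ∑ x : X, (p x - q x) := by rw [Finset.sum_sub_distrib]
    _ ≤ KLdiv p q := Finset.sum_le_sum (fun x _ => key x)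



/-- homogeneity -/
lemma genPoly_homog {n k : ℕ} {α : ℝ} (hα0 : 0 < α) (μ : Finset (Fin n) → ℝ)
    (hμk : ∀ S, μ S ≠ 0 → S.card = k) (c : ℝ) (hc : 0 < c) (w : Fin n → ℝ)
    (hw : ∀ i, 0 < w i) :
    genPoly μ (fun i => (c * w i) ^ α) = c ^ (α * k) * genPoly μ (fun i => w i ^ α) := by
  unfold genPoly
  rw [Finset.mul_sum]
  refine Finset.sum_congr rfl (fun S _ => ?_)
  by_cases hS : μ S = 0
  · simp [hS]
  · have hcard := hμk S hS
    have : ∏ i ∈ S, (c * w i) ^ α = c ^ (α * k) * ∏ i ∈ S, w i ^ α := by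
      have h1 : ∀ i ∈ S, (c * w i) ^ α = c ^ α * w i ^ α := fun i _ =>
        Real.mul_rpow hc.le (hw i).le
      rw [Finset.prod_congr rfl h1, Finset.prod_mul_distrib, Finset.prod_const, hcard,
        ← Real.rpow_natCast (c ^ α) k, ← Real.rpow_mul hc.le]
    rw [this]; ring

lemma genPoly_one {n : ℕ} {α : ℝ} (μ : Finset (Fin n) → ℝ)
    (hμ1 : ∑ S : Finset (Fin n), μ S = 1) :
    genPoly μ (fun i => (1:ℝ) ^ α) = 1 := by
  unfold genPoly
  simp [Real.one_rpow, hμ1]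

/-- derivative of t ↦ genPoly μ ((1+t v)^α) at 0 -/
lemma genPoly_deriv {n : ℕ} {α : ℝ} (hα0 : 0 < α) (μ : Finset (Fin n) → ℝ)
    (v : Fin n → ℝ) :
    HasDerivAt (fun t : ℝ => genPoly μ (fun i => (1 + t * v i) ^ α))
      (∑ S : Finset (Fin n), μ S * ∑ i ∈ S, α * v i) 0 := by
  unfold genPoly
  refine HasDerivAt.fun_sum (fun S _ => ?_)
  have hfac : ∀ i : Fin n, HasDerivAt (fun t : ℝ => (1 + t * v i) ^ α) (α * v i) 0 := by
    intro i
    have hin : HasDerivAt (fun t : ℝ => 1 + t * v i) (v i) 0 := by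
      simpa using ((hasDerivAt_id (0:ℝ)).mul_const (v i)).const_add 1
    have hout : HasDerivAt (fun x : ℝ => x ^ α) (α * (1:ℝ) ^ (α - 1)) (1 + 0 * v i) := by
      simpa using Real.hasDerivAt_rpow_const (x := (1:ℝ)) (p := α) (Or.inl one_ne_zero)
    have := hout.comp 0 hin
    exact (by simpa [Real.one_rpow] using this :
      HasDerivAt ((fun x : ℝ => x ^ α) ∘ fun t : ℝ => 1 + t * v i) (α * v i) 0)
  have hprod := HasDerivAt.fun_finsetProd (u := S) (f := fun i t => (1 + t * v i) ^ α)
    (f' := fun i => α * v i) (x := 0) (fun i _ => hfac i)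
  have hsimp : (∑ i ∈ S, (∏ j ∈ S.erase i, (1 + 0 * v j) ^ α) • (α * v i))
      = ∑ i ∈ S, α * v i := by
    refine Finset.sum_congr rfl (fun i _ => ?_)
    simp [Real.one_rpow]
  rw [hsimp] at hprod
  exact hprod.const_mul (μ S)

/-- concavity tangent bound via right slope -/
lemma tangent_bound {ψ : ℝ → ℝ} {d B : ℝ} (hd : HasDerivAt ψ d 0)
    (hB : ∀ t ∈ Set.Ioo (0:ℝ) 1, B ≤ (ψ t - ψ 0) / t) : B ≤ d := by
  have hslope : Filter.Tendsto (slope ψ 0) (nhdsWithin 0 {(0:ℝ)}ᶜ) (nhds d) :=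
    hasDerivAt_iff_tendsto_slope.mp hd
  have hsub : nhdsWithin (0:ℝ) (Set.Ioi 0) ≤ nhdsWithin 0 {(0:ℝ)}ᶜ :=
    nhdsWithin_mono 0 (fun x hx => ne_of_gt hx)
  have hslope' : Filter.Tendsto (slope ψ 0) (nhdsWithin (0:ℝ) (Set.Ioi 0)) (nhds d) :=
    hslope.mono_left hsub
  refine ge_of_tendsto hslope' ?_
  filter_upwards [Ioo_mem_nhdsGT_of_mem (Set.left_mem_Ico.mpr one_pos)] with t ht
  have := hB t ht
  rw [slope_def_field, sub_zero]
  exact this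

lemma exch {n : ℕ} (f : Finset (Fin n) → ℝ) (a : Fin n → ℝ) :
    ∑ S : Finset (Fin n), f S * ∑ i ∈ S, a i
      = ∑ i : Fin n, a i * ∑ S ∈ Finset.univ.filter (fun S => i ∈ S), f S := by
  have : ∀ S : Finset (Fin n), f S * ∑ i ∈ S, a i
      = ∑ i : Fin n, (if i ∈ S then a i * f S else 0) := by
    intro S
    rw [Finset.sum_ite_mem, Finset.univ_inter, Finset.mul_sum]
    exact Finset.sum_congr rfl (fun i _ => by ring)
  simp_rw [this]
  rw [Finset.sum_comm]
  refine Finset.sum_congr rfl (fun i _ => ?_)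
  rw [Finset.mul_sum, Finset.sum_ite, Finset.sum_const_zero, add_zero]

lemma exch' {n k : ℕ} (hk : 0 < k) (f : Finset (Fin n) → ℝ)
    (hf : ∀ S, f S ≠ 0 → S.card = k) (a : Fin n → ℝ) :
    ∑ S : Finset (Fin n), f S * ∑ i ∈ S, a i
      = (k : ℝ) * ∑ i : Fin n, a i * down1 k f i := by
  rw [exch]
  rw [Finset.mul_sum]
  refine Finset.sum_congr rfl (fun i _ => ?_)
  unfold down1
  have : (k:ℝ) ≠ 0 := Nat.cast_ne_zero.mpr hk.ne'
  field_simp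

lemma margsum {n k : ℕ} (hk : 0 < k) (f : Finset (Fin n) → ℝ)
    (hf : ∀ S, f S ≠ 0 → S.card = k) (hf1 : ∑ S : Finset (Fin n), f S = 1) :
    ∑ i : Fin n, down1 k f i = 1 := by
  have h := exch' hk f hf (fun _ => 1)
  simp only [Finset.sum_const, nsmul_eq_mul, mul_one, one_mul] at h
  have h2 : ∑ S : Finset (Fin n), f S * (S.card : ℝ) = (k:ℝ) * ∑ i : Fin n, down1 k f i := h
  have h3 : ∑ S : Finset (Fin n), f S * (S.card : ℝ) = (k:ℝ) := by
    have : ∀ S : Finset (Fin n), f S * (S.card : ℝ) = f S * (k:ℝ) := by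
      intro S
      by_cases hS : f S = 0
      · simp [hS]
      · rw [hf S hS]
    simp_rw [this]
    rw [← Finset.sum_mul, hf1, one_mul]
  rw [h3] at h2
  have hkne : (k:ℝ) ≠ 0 := Nat.cast_ne_zero.mpr hk.ne'
  field_simp at h2
  linarith


lemma genPoly_pos {n : ℕ} (μ : Finset (Fin n) → ℝ) (hμ0 : ∀ S, 0 ≤ μ S)
    (hμ1 : ∑ S : Finset (Fin n), μ S = 1) (z : Fin n → ℝ) (hz : ∀ i, 0 < z i) :
    0 < genPoly μ z := by
  obtain ⟨S, hS⟩ : ∃ S : Finset (Fin n), 0 < μ S := by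
    by_contra h
    push_neg at h
    have : ∑ S : Finset (Fin n), μ S = 0 :=
      Finset.sum_eq_zero (fun S _ => le_antisymm (h S) (hμ0 S))
    rw [hμ1] at this; norm_num at this
  unfold genPoly
  refine Finset.sum_pos' (fun T _ => ?_) ⟨S, Finset.mem_univ S, ?_⟩
  · exact mul_nonneg (hμ0 T) (Finset.prod_nonneg (fun i _ => (hz i).le))
  · exact mul_pos hS (Finset.prod_pos (fun i _ => hz i))

lemma keyIneq {n k : ℕ} (hk : 0 < k) {α : ℝ} (hα0 : 0 < α)
    (μ' : Finset (Fin n) → ℝ) (hμ'0 : ∀ S, 0 ≤ μ' S) (hμ'k : ∀ S, μ' S ≠ 0 → S.card = k)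
    (hμ'1 : ∑ S : Finset (Fin n), μ' S = 1)
    (hF : ConcaveOn ℝ {z : Fin n → ℝ | ∀ i, 0 < z i}
      (fun z => Real.log (genPoly μ' (fun i => z i ^ α))))
    (w : Fin n → ℝ) (hw : ∀ i, 0 < w i) :
    Real.log (genPoly μ' (fun i => w i ^ α))
      ≤ α * k * Real.log (∑ i : Fin n, down1 k μ' i * w i) := by
  set π := down1 k μ' with hπdef
  have hπ0 : ∀ i, 0 ≤ π i := by
    intro i
    exact mul_nonneg (by positivity) (Finset.sum_nonneg (fun S _ => hμ'0 S))
  have hπ1 : ∑ i : Fin n, π i = 1 := margsum hk μ' hμ'k hμ'1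
  set s := ∑ i : Fin n, π i * w i with hsdef
  have hs : 0 < s := by
    refine Finset.sum_pos' (fun i _ => mul_nonneg (hπ0 i) (hw i).le) ?_
    obtain ⟨i, hi⟩ : ∃ i : Fin n, 0 < π i := by
      by_contra h
      push_neg at h
      have : ∑ i : Fin n, π i = 0 :=
        Finset.sum_eq_zero (fun i _ => le_antisymm (h i) (hπ0 i))
      rw [hπ1] at this; norm_num at this
    exact ⟨i, Finset.mem_univ i, mul_pos hi (hw i)⟩
  set w' := fun i => w i / s with hw'def
  have hw' : ∀ i, 0 < w' i := fun i => div_pos (hw i) hs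
  have hnorm : ∑ i : Fin n, π i * w' i = 1 := by
    simp_rw [hw'def, mul_div_assoc']
    rw [← Finset.sum_div, ← hsdef, div_self hs.ne']
  set v := fun i => w' i - 1 with hvdef
  -- derivative is 0
  have hd0 : (∑ S : Finset (Fin n), μ' S * ∑ i ∈ S, α * v i) = 0 := by
    rw [exch' hk μ' hμ'k (fun i => α * v i)]
    have : ∑ i : Fin n, α * v i * down1 k μ' i
        = α * ((∑ i : Fin n, π i * w' i) - ∑ i : Fin n, π i) := by
      rw [← Finset.sum_sub_distrib, Finset.mul_sum]
      refine Finset.sum_congr rfl (fun i _ => ?_)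
      rw [hvdef]; ring
    rw [this, hnorm, hπ1]
    ring
  set ψ := fun t : ℝ => Real.log (genPoly μ' (fun i => (1 + t * v i) ^ α)) with hψdef
  have hψ0 : ψ 0 = 0 := by
    have : (fun i : Fin n => (1 + 0 * v i) ^ α) = fun _ : Fin n => (1:ℝ) ^ α := by
      funext i; norm_num
    rw [hψdef]; simp only [this]
    rw [genPoly_one μ' hμ'1, Real.log_one]
  have hderiv : HasDerivAt ψ 0 0 := by
    have hg := genPoly_deriv hα0 μ' v
    have hg0 : genPoly μ' (fun i => (1 + 0 * v i) ^ α) = 1 := by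
      have : (fun i : Fin n => (1 + 0 * v i) ^ α) = fun _ : Fin n => (1:ℝ) ^ α := by
        funext i; norm_num
      rw [this, genPoly_one μ' hμ'1]
    have hlog := (Real.hasDerivAt_log (by rw [hg0]; norm_num)).comp 0 hg
    rw [hψdef]
    exact (by simpa [hg0, hd0] using hlog :
      HasDerivAt (Real.log ∘ fun t : ℝ => genPoly μ' (fun i => (1 + t * v i) ^ α)) 0 0)
  have hFw' : Real.log (genPoly μ' (fun i => w' i ^ α)) ≤ 0 := by
    refine tangent_bound hderiv (fun t ht => ?_)
    have hcomb := hF.2 (show (fun _ : Fin n => (1:ℝ)) ∈ {z : Fin n → ℝ | ∀ i, 0 < z i} from fun i => one_pos)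
      (show w' ∈ {z : Fin n → ℝ | ∀ i, 0 < z i} from fun i => hw' i)
      (show (0:ℝ) ≤ 1 - t by linarith [ht.2]) (le_of_lt ht.1) (by ring)
    have heq : ((1 - t) • (fun _ : Fin n => (1:ℝ)) + t • w') = fun i => 1 + t * v i := by
      funext i
      simp only [Pi.add_apply, Pi.smul_apply, smul_eq_mul, hvdef]
      ring
    rw [heq] at hcomb
    have hone : Real.log (genPoly μ' (fun i => ((fun _ : Fin n => (1:ℝ)) i) ^ α)) = 0 := by
      rw [genPoly_one μ' hμ'1, Real.log_one]
    simp only [smul_eq_mul] at hcomb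
    rw [hone] at hcomb
    rw [le_div_iff₀ ht.1, hψ0, sub_zero]
    calc Real.log (genPoly μ' fun i => w' i ^ α) * t
        = (1 - t) * 0 + t * Real.log (genPoly μ' fun i => w' i ^ α) := by ring
      _ ≤ ψ t := hcomb
  -- assemble via homogeneity
  have hfun : (fun i => w i ^ α) = fun i => (s * w' i) ^ α := by
    funext i
    rw [hw'def]
    congr 1
    field_simp
  rw [hfun, genPoly_homog hα0 μ' hμ'k s hs w' hw',
    Real.log_mul (by positivity) (genPoly_pos μ' hμ'0 hμ'1 _ (fun i => Real.rpow_pos_of_pos (hw' i) α)).ne',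
    Real.log_rpow hs]
  calc α * ↑k * Real.log s + Real.log (genPoly μ' fun i => w' i ^ α)
      ≤ α * ↑k * Real.log s + 0 := by linarith
    _ = α * ↑k * Real.log s := by ring

theorem stmt_5 (n k : ℕ) (α : ℝ) (hα0 : 0 < α) (hα1 : α ≤ 1)
    (μ : Finset (Fin n) → ℝ)
    (hμ0 : ∀ S, 0 ≤ μ S)
    (hμk : ∀ S, μ S ≠ 0 → S.card = k)
    (hμ1 : ∑ S : Finset (Fin n), μ S = 1)
    (hFLC : ConcaveOn ℝ {z : Fin n → ℝ | ∀ i, 0 < z i}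
      (fun z => Real.log (genPoly μ (fun i => z i ^ α)))) :
    ∀ lam : Fin n → ℝ, (∀ i, 0 < lam i) →
      ∀ ν : Finset (Fin n) → ℝ,
        (∀ S, 0 ≤ ν S) → (∀ S, ν S ≠ 0 → S.card = k) →
        (∑ S : Finset (Fin n), ν S = 1) →
        (∀ S, extField μ lam S = 0 → ν S = 0) →
        KLdiv (down1 k ν) (down1 k (extField μ lam)) ≤
          (1 / (α * (k : ℝ))) * KLdiv ν (extField μ lam) := by
  intro lam hlam ν hν0 hνk hν1 hsupp
  rcases Nat.eq_zero_or_pos k with hk0 | hk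
  · subst hk0
    simp [KLdiv, down1]
  set Z := ∑ T : Finset (Fin n), μ T * ∏ i ∈ T, lam i with hZdef
  have hZ : 0 < Z := genPoly_pos μ hμ0 hμ1 lam hlam
  set μ' := extField μ lam with hμ'def
  have hμ'eq : ∀ S, μ' S = μ S * (∏ i ∈ S, lam i) / Z := fun S => rfl
  have hμ'0 : ∀ S, 0 ≤ μ' S := by
    intro S
    rw [hμ'eq]
    exact div_nonneg (mul_nonneg (hμ0 S) (Finset.prod_nonneg (fun i _ => (hlam i).le))) hZ.le
  have hμ'1 : ∑ S : Finset (Fin n), μ' S = 1 := by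
    simp_rw [hμ'eq]
    rw [← Finset.sum_div, ← hZdef, div_self hZ.ne']
  have hμ'k : ∀ S, μ' S ≠ 0 → S.card = k := by
    intro S hS
    refine hμk S (fun h => hS ?_)
    rw [hμ'eq, h, zero_mul, zero_div]
  have hμ'supp : ∀ S, ν S ≠ 0 → 0 < μ' S := by
    intro S hS
    rcases eq_or_lt_of_le (hμ'0 S) with h | h
    · exact absurd (hsupp S h.symm) hS
    · exact h
  -- concavity transfer
  have hF : ConcaveOn ℝ {z : Fin n → ℝ | ∀ i, 0 < z i}
      (fun z => Real.log (genPoly μ' (fun i => z i ^ α))) := by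
    set u := fun i => lam i ^ (1/α) with hudef
    have hu : ∀ i, 0 < u i := fun i => Real.rpow_pos_of_pos (hlam i) _
    have hkey : ∀ z : Fin n → ℝ, (∀ i, 0 < z i) →
        Real.log (genPoly μ' (fun i => z i ^ α))
          = Real.log (genPoly μ (fun i => (u i * z i) ^ α)) - Real.log Z := by
      intro z hz
      have h1 : ∀ i : Fin n, (u i * z i) ^ α = lam i * z i ^ α := by
        intro i
        rw [Real.mul_rpow (hu i).le (hz i).le, hudef]
        congr 1
        simp only []
        rw [← Real.rpow_mul (hlam i).le, one_div_mul_cancel hα0.ne', Real.rpow_one]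
      have h2 : genPoly μ (fun i => (u i * z i) ^ α) = Z * genPoly μ' (fun i => z i ^ α) := by
        unfold genPoly
        rw [Finset.mul_sum]
        refine Finset.sum_congr rfl (fun S _ => ?_)
        simp_rw [h1]
        rw [Finset.prod_mul_distrib, hμ'eq]
        field_simp
      rw [h2, Real.log_mul hZ.ne'
        (genPoly_pos μ' hμ'0 hμ'1 _ (fun i => Real.rpow_pos_of_pos (hz i) α)).ne']
      ring
    refine ⟨hFLC.1, ?_⟩
    intro x hx y hy a b ha hb hab
    have hxy : a • x + b • y ∈ {z : Fin n → ℝ | ∀ i, 0 < z i} := hFLC.1 hx hy ha hb hab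
    dsimp only
    rw [hkey x hx, hkey y hy, hkey _ hxy]
    have hux : (fun i => u i * x i) ∈ {z : Fin n → ℝ | ∀ i, 0 < z i} :=
      fun i => mul_pos (hu i) (hx i)
    have huy : (fun i => u i * y i) ∈ {z : Fin n → ℝ | ∀ i, 0 < z i} :=
      fun i => mul_pos (hu i) (hy i)
    have hc := hFLC.2 hux huy ha hb hab
    have heq : (fun i => u i * (a • x + b • y) i)
        = a • (fun i => u i * x i) + b • (fun i => u i * y i) := by
      funext i
      simp only [Pi.add_apply, Pi.smul_apply, smul_eq_mul]
      ring
    simp only [smul_eq_mul] at hc ⊢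
    calc a * (Real.log (genPoly μ (fun i => (u i * x i) ^ α)) - Real.log Z)
          + b * (Real.log (genPoly μ (fun i => (u i * y i) ^ α)) - Real.log Z)
        = a * Real.log (genPoly μ (fun i => (u i * x i) ^ α))
          + b * Real.log (genPoly μ (fun i => (u i * y i) ^ α)) - Real.log Z := by
          linear_combination (-(Real.log Z)) * hab
      _ ≤ Real.log (genPoly μ (fun i => ((a • (fun i => u i * x i) + b • (fun i => u i * y i)) i) ^ α)) - Real.log Z := by
          exact sub_le_sub_right hc _
      _ = Real.log (genPoly μ (fun i => (u i * (a • x + b • y) i) ^ α)) - Real.log Z := by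
          congr 1
          refine congrArg Real.log (congrArg (genPoly μ) ?_)
          funext i
          simp only [Pi.add_apply, Pi.smul_apply, smul_eq_mul]
          ring
  set ρ := down1 k ν with hρdef
  set π := down1 k μ' with hπdef
  have hρ0 : ∀ i, 0 ≤ ρ i := fun i =>
    mul_nonneg (by positivity) (Finset.sum_nonneg (fun S _ => hν0 S))
  have hπ0 : ∀ i, 0 ≤ π i := fun i =>
    mul_nonneg (by positivity) (Finset.sum_nonneg (fun S _ => hμ'0 S))
  have hπ1 : ∑ i : Fin n, π i = 1 := margsum hk μ' hμ'k hμ'1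
  have hρπ : ∀ i, ρ i ≠ 0 → 0 < π i := by
    intro i hi
    obtain ⟨S, hSmem, hSν⟩ : ∃ S ∈ Finset.univ.filter (fun S : Finset (Fin n) => i ∈ S),
        ν S ≠ 0 := by
      by_contra h
      push_neg at h
      exact hi (by rw [hρdef]; unfold down1; rw [Finset.sum_eq_zero h, mul_zero])
    have hpos : 0 < μ' S := hμ'supp S hSν
    have hsum : μ' S ≤ ∑ T ∈ Finset.univ.filter (fun T : Finset (Fin n) => i ∈ T), μ' T :=
      Finset.single_le_sum (fun T _ => hμ'0 T) hSmem
    rw [hπdef]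
    unfold down1
    have hkpos : (0:ℝ) < 1 / (k:ℝ) := by positivity
    exact mul_pos hkpos (lt_of_lt_of_le hpos hsum)
  -- Gibbs chain
  have hB : ∀ w : Fin n → ℝ, (∀ i, 0 < w i) →
      α * k * ((∑ i : Fin n, ρ i * Real.log (w i)) - Real.log (∑ i : Fin n, π i * w i))
        ≤ KLdiv ν μ' := by
    intro w hw
    set G := genPoly μ' (fun i => w i ^ α) with hGdef
    have hG : 0 < G := genPoly_pos μ' hμ'0 hμ'1 _ (fun i => Real.rpow_pos_of_pos (hw i) α)
    set q := fun S : Finset (Fin n) => μ' S * (∏ i ∈ S, w i ^ α) / G with hqdef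
    have hq0 : ∀ S, 0 ≤ q S := fun S =>
      div_nonneg (mul_nonneg (hμ'0 S)
        (Finset.prod_nonneg (fun i _ => (Real.rpow_pos_of_pos (hw i) α).le))) hG.le
    have hq1 : ∑ S : Finset (Fin n), q S = 1 := by
      rw [hqdef, ← Finset.sum_div]
      rw [hGdef]
      unfold genPoly
      rw [div_self]
      rw [hGdef] at hG
      unfold genPoly at hG
      exact hG.ne'
    have habs : ∀ S, q S = 0 → ν S = 0 := by
      intro S hS
      by_contra hνS
      have hpos : 0 < q S := div_pos (mul_pos (hμ'supp S hνS)
        (Finset.prod_pos (fun i _ => Real.rpow_pos_of_pos (hw i) α))) hG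
      rw [hS] at hpos
      exact lt_irrefl 0 hpos
    have hgibbs := gibbs_s5 ν q hν0 hq0 hν1 (le_of_eq hq1) habs
    have hexpand : KLdiv ν q
        = KLdiv ν μ' - (∑ S : Finset (Fin n), ν S * ∑ i ∈ S, α * Real.log (w i))
          + Real.log G := by
      unfold KLdiv
      rw [← Finset.sum_sub_distrib]
      have hν1' : Real.log G = ∑ S : Finset (Fin n), ν S * Real.log G := by
        rw [← Finset.sum_mul, hν1, one_mul]
      rw [hν1', ← Finset.sum_add_distrib]
      refine Finset.sum_congr rfl (fun S _ => ?_)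
      by_cases hνS : ν S = 0
      · simp [hνS]
      · have hμ'S : 0 < μ' S := hμ'supp S hνS
        have hprod : 0 < ∏ i ∈ S, w i ^ α :=
          Finset.prod_pos (fun i _ => Real.rpow_pos_of_pos (hw i) α)
        have hqS : q S = μ' S * (∏ i ∈ S, w i ^ α) / G := rfl
        have hlogprod : Real.log (∏ i ∈ S, w i ^ α) = ∑ i ∈ S, α * Real.log (w i) := by
          rw [Real.log_prod (fun i _ => (Real.rpow_pos_of_pos (hw i) α).ne')]
          exact Finset.sum_congr rfl (fun i _ => Real.log_rpow (hw i) α)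
        have : Real.log (ν S / q S)
            = Real.log (ν S / μ' S) - (∑ i ∈ S, α * Real.log (w i)) + Real.log G := by
          rw [hqS, div_div_eq_mul_div]
          have hν' : ν S ≠ 0 := hνS
          rw [Real.log_div (mul_ne_zero hν' hG.ne') (mul_ne_zero hμ'S.ne' hprod.ne'),
            Real.log_mul hν' hG.ne', Real.log_mul hμ'S.ne' hprod.ne',
            Real.log_div hν' hμ'S.ne', hlogprod]
          ring
        rw [this]
        ring
    have hexch : ∑ S : Finset (Fin n), ν S * ∑ i ∈ S, α * Real.log (w i)
        = (k:ℝ) * ∑ i : Fin n, α * Real.log (w i) * ρ i := exch' hk ν hνk _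
    have hkey := keyIneq hk hα0 μ' hμ'0 hμ'k hμ'1 hF w hw
    rw [hexpand, hexch] at hgibbs
    rw [← hGdef] at hkey
    have hsum : (k:ℝ) * ∑ i : Fin n, α * Real.log (w i) * ρ i
        = α * k * ∑ i : Fin n, ρ i * Real.log (w i) := by
      rw [Finset.mul_sum, Finset.mul_sum]
      refine Finset.sum_congr rfl (fun i _ => ?_)
      ring
    rw [hsum] at hgibbs
    have hπw : ∑ i : Fin n, down1 k μ' i * w i = ∑ i : Fin n, π i * w i := rfl
    rw [hπw] at hkey
    nlinarith [hkey, hgibbs]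
  -- final assembly
  have hαk : (0:ℝ) < α * k := by positivity
  have hmain : α * k * KLdiv ρ π ≤ KLdiv ν μ' := by
    refine le_of_forall_pos_le_add (fun ε hε => ?_)
    set δ := ε / (α * k) with hδdef
    have hδ : 0 < δ := by positivity
    set c := Real.exp δ - 1 with hcdef
    have hc : 0 < c := by
      rw [hcdef]
      have := Real.add_one_le_exp δ
      linarith
    set w := fun i => if ρ i = 0 then c else ρ i / π i with hwdef
    have hw : ∀ i, 0 < w i := by
      intro i
      rw [hwdef]
      by_cases h : ρ i = 0
      · simpa [h] using hc
      · simp only [h, if_false]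
        exact div_pos (lt_of_le_of_ne (hρ0 i) (Ne.symm h)) (hρπ i h)
    have h1 : ∑ i : Fin n, ρ i * Real.log (w i) = KLdiv ρ π := by
      unfold KLdiv
      refine Finset.sum_congr rfl (fun i _ => ?_)
      by_cases h : ρ i = 0
      · simp [h]
      · rw [hwdef]
        simp only [h, if_false]
    have h2 : ∑ i : Fin n, π i * w i ≤ 1 + c := by
      have hle : ∀ i : Fin n, π i * w i ≤ ρ i + π i * c := by
        intro i
        rw [hwdef]
        by_cases h : ρ i = 0
        · simp only [h, if_true]
          linarith [hρ0 i, le_refl (π i * c), h ▸ le_refl (0:ℝ)]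
        · simp only [h, if_false]
          have hπi : 0 < π i := hρπ i h
          rw [mul_div_assoc']
          rw [mul_comm (π i) (ρ i), mul_div_assoc, div_self hπi.ne', mul_one]
          nlinarith [hπ0 i, hc]
      calc ∑ i : Fin n, π i * w i ≤ ∑ i : Fin n, (ρ i + π i * c) :=
            Finset.sum_le_sum (fun i _ => hle i)
        _ = (∑ i : Fin n, ρ i) + (∑ i : Fin n, π i) * c := by
            rw [Finset.sum_add_distrib, Finset.sum_mul]
        _ = 1 + c := by rw [margsum hk ν hνk hν1, hπ1, one_mul]
    have h3 : 0 < ∑ i : Fin n, π i * w i := by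
      refine Finset.sum_pos' (fun i _ => mul_nonneg (hπ0 i) (hw i).le) ?_
      obtain ⟨i, hi⟩ : ∃ i : Fin n, 0 < π i := by
        by_contra h
        push_neg at h
        have : ∑ i : Fin n, π i = 0 :=
          Finset.sum_eq_zero (fun i _ => le_antisymm (h i) (hπ0 i))
        rw [hπ1] at this; norm_num at this
      exact ⟨i, Finset.mem_univ i, mul_pos hi (hw i)⟩
    have h4 : Real.log (∑ i : Fin n, π i * w i) ≤ δ := by
      calc Real.log (∑ i : Fin n, π i * w i) ≤ Real.log (1 + c) :=
            Real.log_le_log h3 h2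
        _ = δ := by rw [hcdef]; rw [show (1:ℝ) + (Real.exp δ - 1) = Real.exp δ by ring,
              Real.log_exp]
    have hBw := hB w hw
    rw [h1] at hBw
    have : α * ↑k * KLdiv ρ π ≤ KLdiv ν μ' + α * ↑k * Real.log (∑ i : Fin n, π i * w i) := by
      nlinarith [hBw]
    calc α * ↑k * KLdiv ρ π ≤ KLdiv ν μ' + α * ↑k * Real.log (∑ i : Fin n, π i * w i) := this
      _ ≤ KLdiv ν μ' + α * ↑k * δ := by nlinarith [h4, hαk]
      _ = KLdiv ν μ' + ε := by rw [hδdef]; field_simp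
  rw [div_mul_eq_mul_div, one_mul, le_div_iff₀ hαk]
  calc KLdiv ρ π * (α * ↑k) = α * ↑k * KLdiv ρ π := by ring
    _ ≤ KLdiv ν μ' := hmain
end
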